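/- arXiv:2405.20779 — 2 statements merged into one kernel-verified Lean document; each statement's English description precedes it below -/
import Mathlib

section
/- Let X be an n×p real matrix, H = Iₙ − (1/n)1ₙ1ₙ' the centering matrix, and let HX = UDV' be a singular value decomposition. Then for any n×n matrices P₁,...,P_p, the matrix Y := (P₁u₁ | ⋯ | P_p u_p) D V' + 1ₙ x̄' (where uⱼ are the columns of U and x̄ = (1/n)X'1ₙ) satisfies: if each Pⱼ is a permutation matrix, then 1ₙ'(Pⱼuⱼ) = 1ₙ'uⱼ, and hence the column mean of Y equals x̄ whenever 1ₙ'U D V' = 0, which holds since H1ₙ = 0 implies 1ₙ'HX = 0. -/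
open Matrix

/-- Spectral anonymization with permutation matrices exactly preserves the
sample mean. Given `X : n × p`, the centering matrix `H`, a decomposition
`HX = U D Vᵀ`, permutation matrices `P₁,...,P_p`, and
`Y := (P₁u₁ | ⋯ | P_p u_p) D Vᵀ + 1ₙ x̄ᵀ` with `x̄ = (1/n) Xᵀ1ₙ`:
each column satisfies `1ₙᵀ(Pⱼuⱼ) = 1ₙᵀuⱼ`, and the column mean of `Y`
equals `x̄`. -/
theorem perm_SA_preserves_mean (n p : ℕ) (hn : 1 ≤ n)
    (X U : Matrix (Fin n) (Fin p) ℝ) (D V : Matrix (Fin p) (Fin p) ℝ)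
    (H : Matrix (Fin n) (Fin n) ℝ)
    (hH : H = 1 - (n : ℝ)⁻¹ • Matrix.of (fun _ _ : Fin n => (1 : ℝ)))
    (hSVD : H * X = U * D * Vᵀ)
    (P : Fin p → Matrix (Fin n) (Fin n) ℝ)
    (hP : ∀ j, ∃ σ : Equiv.Perm (Fin n),
      P j = Matrix.of (fun i k : Fin n => if σ k = i then (1 : ℝ) else 0))
    (xbar : Fin p → ℝ) (hxbar : xbar = fun k => (n : ℝ)⁻¹ * ∑ i, X i k)
    (U₀ : Matrix (Fin n) (Fin p) ℝ)
    (hU₀ : U₀ = Matrix.of (fun i j => (P j).mulVec (fun i' => U i' j) i))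
    (Y : Matrix (Fin n) (Fin p) ℝ)
    (hY : Y = U₀ * D * Vᵀ + Matrix.of (fun _ k => xbar k)) :
    (∀ j, ∑ i, (P j).mulVec (fun i' => U i' j) i = ∑ i, U i j) ∧
    (∀ k, (n : ℝ)⁻¹ * ∑ i, Y i k = xbar k) := by
  have hn0 : (n : ℝ) ≠ 0 := Nat.cast_ne_zero.mpr (by omega)
  have part1 : ∀ j, ∑ i, (P j).mulVec (fun i' => U i' j) i = ∑ i, U i j := by
    intro j
    obtain ⟨σ, hσ⟩ := hP j
    simp only [hσ, Matrix.mulVec, dotProduct, Matrix.of_apply]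
    rw [Finset.sum_comm]
    simp [ite_mul]
  refine ⟨part1, ?_⟩
  -- column sums of H*X vanish
  have hHX : ∀ k, ∑ i, (H * X) i k = 0 := by
    intro k
    simp only [hH, Matrix.sub_apply, Matrix.smul_apply, Matrix.mul_apply,
      Matrix.of_apply, one_mul, smul_eq_mul, sub_mul, Finset.sum_sub_distrib,
      Matrix.one_apply, ite_mul, zero_mul]
    simp only [Finset.sum_ite_eq, Finset.mem_univ, if_true]
    rw [Finset.sum_comm]
    simp only [Finset.sum_const, Finset.card_univ, Fintype.card_fin, nsmul_eq_mul]
    field_simp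
    simp
  -- column sums of U₀ equal those of U
  have hU0sum : ∀ j, ∑ i, U₀ i j = ∑ i, U i j := by
    intro j; rw [hU₀]; exact part1 j
  have aux : ∀ (A : Matrix (Fin n) (Fin p) ℝ) (B : Matrix (Fin p) (Fin p) ℝ) (k : Fin p),
      ∑ i, (A * B) i k = ∑ j, (∑ i, A i j) * B j k := by
    intro A B k
    simp_rw [Matrix.mul_apply]
    rw [Finset.sum_comm]
    simp [Finset.sum_mul]
  have hS : ∀ k, ∑ i, (U₀ * D * Vᵀ) i k = 0 := by
    intro k
    have e1 := aux U₀ (D * Vᵀ) k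
    have e2 := aux U (D * Vᵀ) k
    rw [Matrix.mul_assoc, e1]
    simp_rw [hU0sum]
    rw [← e2, ← Matrix.mul_assoc, ← hSVD]
    exact hHX k
  intro k
  rw [hY]
  simp only [Matrix.add_apply, Matrix.of_apply, Finset.sum_add_distrib, hS k,
    zero_add, Finset.sum_const, Finset.card_univ, Fintype.card_fin, nsmul_eq_mul]
  field_simp
end

section
/- Let K_{p,p} denote the (p,p)-commutation matrix and V_p := diag(vec(I_p)). Then the p²×p² matrix M := 2I_{p²} + 2K_{p,p} − 2V_p is symmetric and positive semidefinite, and M − (I_{p²} + K_{p,p}) = I_{p²} + K_{p,p} − 2V_p is positive semidefinite. -/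
open Matrix

lemma aux_sum_nonneg (p : ℕ) (a c : ℝ) (ha : 0 ≤ a) (hc : c ≤ 2 * a)
    (x : Fin p × Fin p → ℝ) :
    0 ≤ ∑ ij : Fin p × Fin p,
      x ij * (a * x ij + a * x (ij.2, ij.1) - c * (if ij.1 = ij.2 then x ij else 0)) := by
  set f : Fin p × Fin p → ℝ := fun ij =>
    x ij * (a * x ij + a * x (ij.2, ij.1) - c * (if ij.1 = ij.2 then x ij else 0)) with hf
  have h2 : (2:ℝ) * ∑ ij, f ij = ∑ ij : Fin p × Fin p, (f ij + f (ij.2, ij.1)) := by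
    rw [Finset.sum_add_distrib, two_mul]
    congr 1
    exact ((Equiv.prodComm (Fin p) (Fin p)).sum_comp f).symm
  have hterm : ∀ ij : Fin p × Fin p, 0 ≤ f ij + f (ij.2, ij.1) := by
    rintro ⟨i, j⟩
    rcases eq_or_ne i j with h | h
    · subst h
      simp only [hf, if_pos rfl, if_true]
      nlinarith [mul_nonneg (sq_nonneg (x (i, i))) (by linarith : (0:ℝ) ≤ 2 * a - c)]
    · simp only [hf, if_neg h, if_neg (Ne.symm h)]
      nlinarith [sq_nonneg (x (i, j) + x (j, i))]
  have hs : (0:ℝ) ≤ ∑ ij : Fin p × Fin p, (f ij + f (ij.2, ij.1)) :=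
    Finset.sum_nonneg (fun ij _ => hterm ij)
  linarith [h2, hs]

/-- With `K` the `(p,p)`-commutation matrix (characterized by
`K vec(A) = vec(Aᵀ)` for all `p × p` matrices `A`, vectors being indexed by
pairs) and `V = diag(vec(I_p))`, the matrix `M = 2I + 2K − 2V` is symmetric and
positive semidefinite, and `M − (I + K) = I + K − 2V` is positive
semidefinite. -/
theorem commutation_matrix_psd (p : ℕ)
    (K : Matrix (Fin p × Fin p) (Fin p × Fin p) ℝ)
    (hK : ∀ A : Matrix (Fin p) (Fin p) ℝ,
      K.mulVec (fun ij => A ij.1 ij.2) = fun ij => A ij.2 ij.1)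
    (V : Matrix (Fin p × Fin p) (Fin p × Fin p) ℝ)
    (hV : V = Matrix.diagonal (fun ij => if ij.1 = ij.2 then (1 : ℝ) else 0)) :
    (2 • (1 : Matrix (Fin p × Fin p) (Fin p × Fin p) ℝ) + 2 • K - 2 • V).IsSymm ∧
    (2 • (1 : Matrix (Fin p × Fin p) (Fin p × Fin p) ℝ) + 2 • K - 2 • V).PosSemidef ∧
    ((1 : Matrix (Fin p × Fin p) (Fin p × Fin p) ℝ) + K - 2 • V).PosSemidef := by
  subst hV
  -- K applied to any vector
  have hKv : ∀ x : Fin p × Fin p → ℝ, K.mulVec x = fun ij => x (ij.2, ij.1) := by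
    intro x
    have h := hK (fun a b => x (a, b))
    simpa using h
  -- entries of K
  have hKe : ∀ i j k l : Fin p, K (i, j) (k, l) = if j = k ∧ i = l then 1 else 0 := by
    intro i j k l
    have h := congrFun (hKv (Pi.single (k, l) 1)) (i, j)
    rw [Matrix.mulVec_single] at h
    simp only [mul_one, MulOpposite.op_one, one_smul, Matrix.col_apply] at h
    rw [h]
    by_cases hc : (j, i) = (k, l)
    · rw [hc, Pi.single_eq_same, if_pos ⟨(Prod.mk.injEq _ _ _ _ ▸ hc).1, (Prod.mk.injEq _ _ _ _ ▸ hc).2⟩]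
    · rw [Pi.single_eq_of_ne hc, if_neg (fun ⟨h1, h2⟩ => hc (by rw [h1, h2]))]
  have hKsymm : K.IsSymm := by
    ext ⟨i, j⟩ ⟨k, l⟩
    rw [Matrix.transpose_apply, hKe, hKe]
    by_cases h1 : j = k <;> by_cases h2 : i = l <;> simp_all [eq_comm]
  -- mulVec computations
  have hVv : ∀ x : Fin p × Fin p → ℝ,
      (Matrix.diagonal (fun ij : Fin p × Fin p => if ij.1 = ij.2 then (1:ℝ) else 0)).mulVec x
        = fun ij => if ij.1 = ij.2 then x ij else 0 := by
    intro x
    funext ij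
    rw [Matrix.mulVec_diagonal]
    by_cases h : ij.1 = ij.2 <;> simp [h]
  have hsymm : (2 • (1 : Matrix (Fin p × Fin p) (Fin p × Fin p) ℝ) + 2 • K - 2 •
      Matrix.diagonal (fun ij : Fin p × Fin p => if ij.1 = ij.2 then (1:ℝ) else 0)).IsSymm := by
    unfold Matrix.IsSymm
    rw [Matrix.transpose_sub, Matrix.transpose_add, Matrix.transpose_smul, Matrix.transpose_smul,
      Matrix.transpose_smul, Matrix.transpose_one, hKsymm, (Matrix.isSymm_diagonal _)]
  have herm1 : (2 • (1 : Matrix (Fin p × Fin p) (Fin p × Fin p) ℝ) + 2 • K - 2 •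
      Matrix.diagonal (fun ij : Fin p × Fin p => if ij.1 = ij.2 then (1:ℝ) else 0)).IsHermitian := by
    rw [Matrix.IsHermitian, conjTranspose_eq_transpose_of_trivial]
    exact hsymm
  have hsymm2 : ((1 : Matrix (Fin p × Fin p) (Fin p × Fin p) ℝ) + K - 2 •
      Matrix.diagonal (fun ij : Fin p × Fin p => if ij.1 = ij.2 then (1:ℝ) else 0)).IsSymm := by
    unfold Matrix.IsSymm
    rw [Matrix.transpose_sub, Matrix.transpose_add, Matrix.transpose_smul,
      Matrix.transpose_one, hKsymm, (Matrix.isSymm_diagonal _)]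
  have herm2 : ((1 : Matrix (Fin p × Fin p) (Fin p × Fin p) ℝ) + K - 2 •
      Matrix.diagonal (fun ij : Fin p × Fin p => if ij.1 = ij.2 then (1:ℝ) else 0)).IsHermitian := by
    rw [Matrix.IsHermitian, conjTranspose_eq_transpose_of_trivial]
    exact hsymm2
  refine ⟨hsymm, .of_dotProduct_mulVec_nonneg herm1 ?_, .of_dotProduct_mulVec_nonneg herm2 ?_⟩
  · intro x
    have hmv : (2 • (1 : Matrix (Fin p × Fin p) (Fin p × Fin p) ℝ) + 2 • K - 2 •
        Matrix.diagonal (fun ij : Fin p × Fin p => if ij.1 = ij.2 then (1:ℝ) else 0)).mulVec x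
        = fun ij => 2 * x ij + 2 * x (ij.2, ij.1) - 2 * (if ij.1 = ij.2 then x ij else 0) := by
      rw [Matrix.sub_mulVec, Matrix.add_mulVec, Matrix.smul_mulVec,
        Matrix.smul_mulVec, Matrix.smul_mulVec, Matrix.one_mulVec, hKv, hVv]
      funext ij
      simp [smul_eq_mul]
    rw [hmv]
    simpa [dotProduct, RCLike.star_def, smul_eq_mul] using
      aux_sum_nonneg p 2 2 (by norm_num) (by norm_num) x
  · intro x
    have hmv : ((1 : Matrix (Fin p × Fin p) (Fin p × Fin p) ℝ) + K - 2 •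
        Matrix.diagonal (fun ij : Fin p × Fin p => if ij.1 = ij.2 then (1:ℝ) else 0)).mulVec x
        = fun ij => 1 * x ij + 1 * x (ij.2, ij.1) - 2 * (if ij.1 = ij.2 then x ij else 0) := by
      rw [Matrix.sub_mulVec, Matrix.add_mulVec, Matrix.smul_mulVec,
        Matrix.one_mulVec, hKv, hVv]
      funext ij
      simp [smul_eq_mul]
    rw [hmv]
    simpa [dotProduct, RCLike.star_def, smul_eq_mul] using
      aux_sum_nonneg p 1 2 (by norm_num) (by norm_num) x
end
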